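/- If f ∈ H_w satisfies f(∞) := lim_{t→∞} f(t) = 0, then the shift semigroup satisfies ‖S_t f‖²_{w,∞} ≤ e^{-α_w t} ‖f‖²_{w,∞} where α_w = inf_{x≥0} w'(x)/w(x), i.e. the restriction of S_t to H_w⁰ has operator norm at most e^{-α_w t/2} in the ‖·‖_{w,∞} norm. -/

import Mathlib

open MeasureTheory Set Filter Real

-- key growth lemma
lemma key_growth (w : ℝ → ℝ) (hw_diff : Differentiable ℝ w)
    (hw_cont : Continuous (deriv w))
    (α : ℝ) (hα : ∀ x ≥ (0:ℝ), α * w x ≤ deriv w x)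
    (t : ℝ) (ht : 0 ≤ t) (x : ℝ) (hx : 0 ≤ x) :
    w x ≤ Real.exp (-(α * t)) * w (x + t) := by
  set g : ℝ → ℝ := fun s => Real.exp (-(α * s)) * w (x + s) with hg
  have hD : ∀ s : ℝ, HasDerivAt g
      (Real.exp (-(α * s)) * (deriv w (x + s) - α * w (x + s))) s := by
    intro s
    have h1 : HasDerivAt (fun s : ℝ => -(α * s)) (-α) s := by
      exact (((hasDerivAt_id s).const_mul α).neg).congr_deriv (by ring)
    have h2 : HasDerivAt (fun s : ℝ => Real.exp (-(α * s)))
        (Real.exp (-(α * s)) * (-α)) s := (Real.hasDerivAt_exp _).comp s h1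
    have h3 : HasDerivAt (fun s : ℝ => w (x + s)) (deriv w (x + s)) s := by
      have hinner : HasDerivAt (fun s : ℝ => x + s) 1 s := by
        simpa using (hasDerivAt_id s).const_add x
      exact ((hw_diff (x + s)).hasDerivAt.comp s hinner).congr_deriv (mul_one _)
    have := h2.mul h3
    refine this.congr_deriv ?_
    ring
  have hmono : MonotoneOn g (Ici (0:ℝ)) := by
    apply monotoneOn_of_deriv_nonneg (convex_Ici 0)
    · exact (Continuous.continuousOn (by
        exact ((Real.continuous_exp.comp (continuous_const.mul continuous_id).neg).mul
          (hw_diff.continuous.comp (continuous_const.add continuous_id)))))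
    · intro s _
      exact (hD s).differentiableAt.differentiableWithinAt
    · intro s hs
      rw [interior_Ici] at hs
      rw [(hD s).deriv]
      have hxs : (0:ℝ) ≤ x + s := add_nonneg hx (le_of_lt hs)
      have := hα (x + s) hxs
      have h4 : 0 ≤ deriv w (x + s) - α * w (x + s) := by linarith
      positivity
  have := hmono (self_mem_Ici) (show t ∈ Ici (0:ℝ) from ht) ht
  simpa [g] using this

/-- if `f ∈ H_w` has `f(∞) = 0`, then the shift semigroup satisfies
`‖S_t f‖²_{w,∞} ≤ e^{−α_w t}‖f‖²_{w,∞}`, where `α_w = inf_{x≥0} w'(x)/w(x)`.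
Since `(S_t f)(∞) = 0 = f(∞)`, the `‖·‖_{w,∞}`-norms are just the weighted integrals
of the derivatives. -/
theorem stmt_6 {U : Type*} [NormedAddCommGroup U] [InnerProductSpace ℝ U]
    [CompleteSpace U] [SecondCountableTopology U]
    (w : ℝ → ℝ) (hw_diff : Differentiable ℝ w) (hw_cont : Continuous (deriv w))
    (hw_mono : MonotoneOn w (Ici 0)) (hw0 : w 0 = 1)
    (hw_inv : IntegrableOn (fun s => (w s)⁻¹) (Ioi 0))
    (α : ℝ) (hα : ∀ x ≥ (0:ℝ), α * w x ≤ deriv w x)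
    (t : ℝ) (ht : 0 ≤ t)
    (f f' : ℝ → U)
    (hf_loc : ∀ y ∈ Ici (0:ℝ), IntervalIntegrable f' volume 0 y)
    (hf_ac : ∀ y ∈ Ici (0:ℝ), f y = f 0 + ∫ s in (0:ℝ)..y, f' s)
    (hf_w : IntegrableOn (fun y => w y * ‖f' y‖ ^ 2) (Ioi 0))
    (hf_inf : Tendsto f atTop (nhds (0:U))) :
    ∫ x in Ioi (0:ℝ), w x * ‖f' (x + t)‖ ^ 2
      ≤ Real.exp (-(α * t)) * ∫ x in Ioi (0:ℝ), w x * ‖f' x‖ ^ 2 := by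
  set G : ℝ → ℝ := fun y => w y * ‖f' y‖ ^ 2 with hG
  have hwpos : ∀ y : ℝ, 0 ≤ y → (0:ℝ) ≤ w y := fun y hy => by
    have := hw_mono self_mem_Ici hy hy
    rw [hw0] at this; linarith
  have hGnonneg : ∀ y : ℝ, 0 ≤ y → 0 ≤ G y := fun y hy =>
    mul_nonneg (hwpos y hy) (by positivity)
  have A : MeasurableEmbedding (fun x : ℝ => x + t) :=
    (Homeomorph.addRight t).isClosedEmbedding.measurableEmbedding
  have hpre : (fun x : ℝ => x + t) ⁻¹' Ioi t = Ioi 0 := by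
    ext x; simp [lt_add_iff_pos_left]
  have hGt : IntegrableOn G (Ioi t) := hf_w.mono_set (Ioi_subset_Ioi ht)
  -- translated integrability
  have hshift_int : IntegrableOn (fun x => G (x + t)) (Ioi 0) := by
    have := hGt
    rw [IntegrableOn, ← map_add_right_eq_self volume t] at this
    have h2 := (MeasurableEmbedding.integrableOn_map_iff A).mp this
    rwa [hpre] at h2
  -- translated integral value
  have hshift_eq : ∫ x in Ioi (0:ℝ), G (x + t) = ∫ y in Ioi t, G y := by
    symm
    calc ∫ y in Ioi t, G y
        = ∫ y in Ioi t, G y ∂(Measure.map (fun x => x + t) volume) := by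
          rw [map_add_right_eq_self]
      _ = ∫ x in (fun x : ℝ => x + t) ⁻¹' Ioi t, G (x + t) := A.setIntegral_map G _
      _ = ∫ x in Ioi (0:ℝ), G (x + t) := by rw [hpre]
  have step1 : ∫ x in Ioi (0:ℝ), w x * ‖f' (x + t)‖ ^ 2
      ≤ ∫ x in Ioi (0:ℝ), Real.exp (-(α * t)) * G (x + t) := by
    apply integral_mono_of_nonneg
    · filter_upwards [ae_restrict_mem measurableSet_Ioi] with x hx
      exact mul_nonneg (hwpos x (le_of_lt hx)) (by positivity)
    · exact hshift_int.const_mul _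
    · filter_upwards [ae_restrict_mem measurableSet_Ioi] with x hx
      have hkey := key_growth w hw_diff hw_cont α hα t ht x (le_of_lt hx)
      calc w x * ‖f' (x + t)‖ ^ 2
          ≤ (Real.exp (-(α * t)) * w (x + t)) * ‖f' (x + t)‖ ^ 2 :=
            mul_le_mul_of_nonneg_right hkey (by positivity)
        _ = Real.exp (-(α * t)) * G (x + t) := by simp [G]; ring
  have step2 : ∫ x in Ioi (0:ℝ), Real.exp (-(α * t)) * G (x + t)
      = Real.exp (-(α * t)) * ∫ y in Ioi t, G y := by
    rw [integral_const_mul, hshift_eq]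
  have step3 : ∫ y in Ioi t, G y ≤ ∫ y in Ioi (0:ℝ), G y := by
    apply setIntegral_mono_set hf_w
    · filter_upwards [ae_restrict_mem measurableSet_Ioi] with y hy
      exact hGnonneg y (le_of_lt hy)
    · exact HasSubset.Subset.eventuallyLE (Ioi_subset_Ioi ht)
  calc ∫ x in Ioi (0:ℝ), w x * ‖f' (x + t)‖ ^ 2
      ≤ Real.exp (-(α * t)) * ∫ y in Ioi t, G y := by rw [← step2]; exact step1
    _ ≤ Real.exp (-(α * t)) * ∫ y in Ioi (0:ℝ), G y :=
        mul_le_mul_of_nonneg_left step3 (Real.exp_nonneg _)
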